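/- Let P and P' be two 2-planes in C^n that are ω-orthogonal (i.e., ω(u,v)=0 for all u in P, v in P'), where ω is the standard symplectic form on C^n. Let α(t) be a curve in P and β(t) a curve in P' satisfying ω(α(t), α'(t)) = ω(β(t), β'(t)) for all t. Then the surface F(t,s) = cos(s)·α(t) + sin(s)·β(t) is isotropic, i.e., the pullback of ω by F vanishes identically. -/

import Mathlib

open Real

/-- The standard symplectic form on `ℂⁿ`: the imaginary part of the Hermitian inner product. -/
noncomputable def omegaCn (n : ℕ) (u v : EuclideanSpace ℂ (Fin n)) : ℝ :=
  (inner ℂ u v : ℂ).im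

lemma omegaCn_add_left (n : ℕ) (a b c : EuclideanSpace ℂ (Fin n)) :
    omegaCn n (a + b) c = omegaCn n a c + omegaCn n b c := by
  simp [omegaCn, inner_add_left]

lemma omegaCn_add_right (n : ℕ) (a b c : EuclideanSpace ℂ (Fin n)) :
    omegaCn n a (b + c) = omegaCn n a b + omegaCn n a c := by
  simp [omegaCn, inner_add_right]

lemma omegaCn_smul_left (n : ℕ) (r : ℝ) (a c : EuclideanSpace ℂ (Fin n)) :
    omegaCn n (r • a) c = r * omegaCn n a c := by
  rw [omegaCn, show (r • a) = ((r : ℂ) • a) from RCLike.real_smul_eq_coe_smul r a,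
    inner_smul_left]
  simp [omegaCn]

lemma omegaCn_smul_right (n : ℕ) (r : ℝ) (a c : EuclideanSpace ℂ (Fin n)) :
    omegaCn n a (r • c) = r * omegaCn n a c := by
  rw [omegaCn, show (r • c) = ((r : ℂ) • c) from RCLike.real_smul_eq_coe_smul r c,
    inner_smul_right]
  simp [omegaCn]

lemma omegaCn_antisymm (n : ℕ) (a b : EuclideanSpace ℂ (Fin n)) :
    omegaCn n a b = - omegaCn n b a := by
  simp only [omegaCn, ← inner_conj_symm b a, Complex.conj_im, neg_neg]

lemma deriv_mem_of_closed {E : Type*} [NormedAddCommGroup E] [NormedSpace ℝ E]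
    (P : Submodule ℝ E) (hcl : IsClosed (P : Set E)) (f : ℝ → E) (t : ℝ)
    (hf : DifferentiableAt ℝ f t) (hmem : ∀ x, f x ∈ P) : deriv f t ∈ P := by
  have h := hf.hasDerivAt
  rw [hasDerivAt_iff_tendsto_slope] at h
  refine hcl.mem_of_tendsto h ?_
  filter_upwards with y
  exact P.smul_mem _ (P.sub_mem (hmem y) (hmem t))

/-- If `P`, `P'` are ω-orthogonal 2-planes in `ℂⁿ`, `α` a curve in `P`,
`β` a curve in `P'` with `ω(α, α') = ω(β, β')`, then `F(t,s) = cos s • α t + sin s • β t`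
is isotropic: `ω(F_t, F_s) = 0` everywhere. -/
theorem isotropic_of_cos_sin_combination
    (n : ℕ) (P P' : Submodule ℝ (EuclideanSpace ℂ (Fin n)))
    (hP : Module.finrank ℝ P = 2) (hP' : Module.finrank ℝ P' = 2)
    (horth : ∀ u ∈ P, ∀ v ∈ P', omegaCn n u v = 0)
    (α β : ℝ → EuclideanSpace ℂ (Fin n))
    (hα : Differentiable ℝ α) (hβ : Differentiable ℝ β)
    (hαP : ∀ t, α t ∈ P) (hβP' : ∀ t, β t ∈ P')
    (hω : ∀ t, omegaCn n (α t) (deriv α t) = omegaCn n (β t) (deriv β t))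
    (F : ℝ → ℝ → EuclideanSpace ℂ (Fin n))
    (hF : ∀ t s, F t s = Real.cos s • α t + Real.sin s • β t) :
    ∀ t s, omegaCn n (deriv (fun t' => F t' s) t) (deriv (fun s' => F t s') s) = 0 := by
  intro t s
  have hclP : IsClosed (P : Set (EuclideanSpace ℂ (Fin n))) := P.closed_of_finiteDimensional
  have hclP' : IsClosed (P' : Set (EuclideanSpace ℂ (Fin n))) := P'.closed_of_finiteDimensional
  have hα'P : deriv α t ∈ P := deriv_mem_of_closed P hclP α t (hα t) hαP
  have hβ'P' : deriv β t ∈ P' := deriv_mem_of_closed P' hclP' β t (hβ t) hβP'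
  have h1 : HasDerivAt (fun t' => F t' s) (Real.cos s • deriv α t + Real.sin s • deriv β t) t := by
    have := (((hα t).hasDerivAt.const_smul (Real.cos s)).add
      ((hβ t).hasDerivAt.const_smul (Real.sin s)))
    exact this.congr_of_eventuallyEq (by filter_upwards with x; rw [hF]; rfl)
  have h2 : HasDerivAt (fun s' => F t s')
      ((-Real.sin s) • α t + Real.cos s • β t) s := by
    have := ((Real.hasDerivAt_cos s).smul_const (α t)).add
      ((Real.hasDerivAt_sin s).smul_const (β t))
    exact this.congr_of_eventuallyEq (by filter_upwards with x; rw [hF]; rfl)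
  rw [h1.deriv, h2.deriv]
  have hab : omegaCn n (deriv α t) (β t) = 0 := horth _ hα'P _ (hβP' t)
  have hba : omegaCn n (deriv β t) (α t) = 0 := by
    rw [omegaCn_antisymm]; simp [horth _ (hαP t) _ hβ'P']
  have haa : omegaCn n (deriv α t) (α t) = - omegaCn n (α t) (deriv α t) :=
    omegaCn_antisymm n _ _
  have hbb : omegaCn n (deriv β t) (β t) = - omegaCn n (β t) (deriv β t) :=
    omegaCn_antisymm n _ _
  simp only [omegaCn_add_left, omegaCn_add_right, omegaCn_smul_left, omegaCn_smul_right,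
    hab, hba, haa, hbb, hω t]
  ring
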